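/- Define λ(p,q) = q·(−1/24 − (p²+1)/(24q²)) + p/8 + p·s(p,q)/2. Then for natural numbers n ≥ 1 and b ≥ 1, λ(2n²b² + 2nb + 1, 2nb²) = b²(n³ − n)/12. -/

import Mathlib

/-- The sawtooth function `((x))`: zero on integers, else `x - ⌊x⌋ - 1/2`. -/
def saw (x : ℚ) : ℚ := if x = ⌊x⌋ then 0 else x - ⌊x⌋ - 1/2

/-- The Dedekind sum `s(p,q) = ∑_{i=1}^{|q|} ((i/q)) ((p i/q))`. -/
noncomputable def dedekindSum (p q : ℤ) : ℚ :=
  ∑ i ∈ Finset.Icc (1 : ℤ) |q|, saw ((i : ℚ) / (q : ℚ)) * saw ((p : ℚ) * (i : ℚ) / (q : ℚ))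

/-- Lescop's formula for the lens space `L(p,q)`. -/
noncomputable def lescopLens (p q : ℤ) : ℚ :=
  (q : ℚ) * (-1/24 - ((p : ℚ) ^ 2 + 1) / (24 * (q : ℚ) ^ 2)) + (p : ℚ) / 8 +
    (p : ℚ) * dedekindSum p q / 2

set_option maxHeartbeats 1000000

lemma saw_eq (x : ℚ) (k : ℤ) (h1 : (k : ℚ) < x) (h2 : x < k + 1) :
    saw x = x - k - 1/2 := by
  have hf : ⌊x⌋ = k := by
    rw [Int.floor_eq_iff]
    exact ⟨le_of_lt h1, h2⟩
  rw [saw, hf, if_neg]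
  intro h
  rw [h] at h1
  exact lt_irrefl _ h1

lemma sum_quad (A B C : ℚ) (N : ℕ) (f : ℕ → ℚ)
    (hf : ∀ r, f r = A + B * r + C * r ^ 2) :
    ∑ r ∈ Finset.range N, f r =
      A * N + B * (N * (N - 1) / 2) + C * (N * (N - 1) * (2 * N - 1) / 6) := by
  induction N with
  | zero => simp
  | succ N ih => rw [Finset.sum_range_succ, ih, hf]; push_cast; ring

lemma sum_quad_Ico (A B C : ℚ) (a N : ℕ) (h : a ≤ N) (f : ℕ → ℚ)
    (hf : ∀ r, f r = A + B * r + C * r ^ 2) :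
    ∑ r ∈ Finset.Ico a N, f r =
      (A * N + B * (N * (N - 1) / 2) + C * (N * (N - 1) * (2 * N - 1) / 6))
      - (A * a + B * (a * (a - 1) / 2) + C * (a * (a - 1) * (2 * a - 1) / 6)) := by
  have h1 := sum_quad A B C N f hf
  have h2 := sum_quad A B C a f hf
  have h3 := Finset.sum_Ico_consecutive f (Nat.zero_le a) h
  rw [Finset.range_eq_Ico] at h1 h2
  linarith

lemma sum_Icc_int (F : ℤ → ℚ) (M : ℕ) :
    ∑ i ∈ Finset.Icc (1:ℤ) (M:ℤ), F i = ∑ i ∈ Finset.range M, F ((i:ℤ)+1) := by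
  induction M with
  | zero => simp
  | succ M ih =>
    rw [Finset.sum_range_succ, ← ih, Nat.cast_succ]
    have hins : Finset.Icc (1:ℤ) ((M:ℤ)+1) = insert ((M:ℤ)+1) (Finset.Icc 1 (M:ℤ)) := by
      ext x; simp; omega
    rw [hins, Finset.sum_insert (by simp)]
    ring

lemma sum_range_shift (F : ℕ → ℚ) (M : ℕ) (h0 : F 0 = 0) (hM : F M = 0) :
    ∑ i ∈ Finset.range M, F (i+1) = ∑ i ∈ Finset.range M, F i := by
  have h := Finset.sum_range_succ' F M
  rw [Finset.sum_range_succ] at h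
  linarith

lemma sum_range_mul (F : ℕ → ℚ) (N b : ℕ) :
    ∑ i ∈ Finset.range (N*b), F i = ∑ m ∈ Finset.range N, ∑ r ∈ Finset.range b, F (b*m+r) := by
  induction N with
  | zero => simp
  | succ N ih =>
    rw [Finset.sum_range_succ, ← ih, Nat.succ_mul]
    have h3 := Finset.sum_Ico_consecutive F (Nat.zero_le (N*b)) (Nat.le_add_right (N*b) b)
    rw [Finset.range_eq_Ico, ← h3, ← Finset.range_eq_Ico]
    congr 1
    rw [Finset.sum_Ico_eq_sum_range]
    simp only [Nat.add_sub_cancel_left]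
    exact Finset.sum_congr rfl fun i _ => by rw [mul_comm]

lemma point_lemma (n b m r : ℕ) (hn : 1 ≤ n) (hb : 1 ≤ b) (hm : m < 2*n*b) (hr : r < b) :
    saw (((b*m+r : ℕ):ℚ) / (2*(n:ℚ)*(b:ℚ)^2)) *
      saw ((2*(n:ℚ)^2*(b:ℚ)^2+2*(n:ℚ)*(b:ℚ)+1) * ((b*m+r : ℕ):ℚ) / (2*(n:ℚ)*(b:ℚ)^2)) =
    ((((b:ℚ)*m+r)/(2*(n:ℚ)*(b:ℚ)^2) - 1/2) *
        ((r:ℚ)/(b:ℚ) + ((b:ℚ)*m+r)/(2*(n:ℚ)*(b:ℚ)^2) - 1/2)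
      - (if 1 ≤ r ∧ 2*n*(b-r) ≤ m then (((b:ℚ)*m+r)/(2*(n:ℚ)*(b:ℚ)^2) - 1/2) else 0))
      - (if b*m+r = 0 then (1/4:ℚ) else 0) := by
  have hn0 : (0:ℚ) < n := by exact_mod_cast hn
  have hb0 : (0:ℚ) < b := by exact_mod_cast hb
  have hq0 : (0:ℚ) < 2*(n:ℚ)*(b:ℚ)^2 := by
    have : (0:ℚ) < 2*(n:ℚ) := by linarith
    exact mul_pos this (pow_pos hb0 2)
  by_cases h0 : b*m+r = 0
  · obtain ⟨h1, h2⟩ := Nat.add_eq_zero.mp h0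
    have hm0 : m = 0 := by
      rcases Nat.mul_eq_zero.mp h1 with h | h
      · omega
      · exact h
    subst hm0; subst h2
    norm_num [saw]
  · have hi1 : 1 ≤ b*m+r := Nat.pos_of_ne_zero h0
    have hilt : b*m+r < 2*n*b^2 := by nlinarith
    have saw1 : saw (((b*m+r : ℕ):ℚ) / (2*(n:ℚ)*(b:ℚ)^2))
        = ((b*m+r : ℕ):ℚ) / (2*(n:ℚ)*(b:ℚ)^2) - 1/2 := by
      have h1 : ((0:ℤ):ℚ) < ((b*m+r : ℕ):ℚ) / (2*(n:ℚ)*(b:ℚ)^2) := by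
        push_cast
        apply div_pos _ hq0
        exact_mod_cast hi1
      have h2 : ((b*m+r : ℕ):ℚ) / (2*(n:ℚ)*(b:ℚ)^2) < ((0:ℤ):ℚ) + 1 := by
        push_cast
        rw [zero_add, div_lt_one hq0]
        have := (Nat.cast_lt (α := ℚ)).mpr hilt
        push_cast at this
        linarith
      have := saw_eq _ 0 h1 h2
      simpa using this
    by_cases hχ : 1 ≤ r ∧ 2*n*(b-r) ≤ m
    · obtain ⟨h1r, h2m⟩ := hχ
      set s := b - r with hs_def
      have hbs : b = r + s := by omega
      have key1 : (n*(b*m+r)+m+1) * (2*n*b^2) < (2*n^2*b^2+2*n*b+1) * (b*m+r) := by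
        have hmul : (r+s)*(2*n*s) ≤ (r+s)*m := Nat.mul_le_mul_left _ h2m
        rw [hbs]
        have hkey : 2*n*(r+s)^2 < 2*n*(r+s)*r + (r+s)*m + r := by nlinarith [hmul, h1r]
        nlinarith [hkey]
      have key2 : (2*n^2*b^2+2*n*b+1) * (b*m+r) < (n*(b*m+r)+m+2) * (2*n*b^2) := by
        have hA : b*(m+1) ≤ b*(2*n*b) := Nat.mul_le_mul_left _ hm
        have hB : (2*n*b)*(r+1) ≤ (2*n*b)*b := Nat.mul_le_mul_left _ hr
        have hkey : 2*n*b*r + b*m + r < 2*(2*n*b^2) := by nlinarith [hA, hB, hr]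
        nlinarith [hkey]
      have hc1 : ((((n*(b*m+r)+m+1 : ℕ):ℤ)):ℚ)
          < (2*(n:ℚ)^2*(b:ℚ)^2+2*(n:ℚ)*(b:ℚ)+1) * ((b*m+r : ℕ):ℚ) / (2*(n:ℚ)*(b:ℚ)^2) := by
        rw [lt_div_iff₀ hq0]
        have := (Nat.cast_lt (α := ℚ)).mpr key1
        push_cast at this ⊢
        linarith
      have hc2 : (2*(n:ℚ)^2*(b:ℚ)^2+2*(n:ℚ)*(b:ℚ)+1) * ((b*m+r : ℕ):ℚ) / (2*(n:ℚ)*(b:ℚ)^2)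
          < ((((n*(b*m+r)+m+1 : ℕ):ℤ)):ℚ) + 1 := by
        rw [div_lt_iff₀ hq0]
        have := (Nat.cast_lt (α := ℚ)).mpr key2
        push_cast at this ⊢
        linarith
      have saw2 := saw_eq _ ((n*(b*m+r)+m+1 : ℕ):ℤ) hc1 hc2
      rw [saw1, saw2, if_pos ⟨h1r, h2m⟩, if_neg h0]
      push_cast
      field_simp
      ring
    · have key1 : (n*(b*m+r)+m) * (2*n*b^2) < (2*n^2*b^2+2*n*b+1) * (b*m+r) := by
        nlinarith [hi1]
      have key2 : (2*n^2*b^2+2*n*b+1) * (b*m+r) < (n*(b*m+r)+m+1) * (2*n*b^2) := by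
        by_cases hr0 : r = 0
        · subst hr0
          have hkey : b*m < 2*n*b^2 := by nlinarith [hm, hb]
          nlinarith [hkey]
        · have h1r : 1 ≤ r := Nat.pos_of_ne_zero hr0
          have h2m : m < 2*n*(b-r) := by
            by_contra hcon
            exact hχ ⟨h1r, le_of_not_gt hcon⟩
          set s := b - r with hs_def
          have hbs : b = r + s := by omega
          have hs1 : 1 ≤ s := by omega
          have hA : (r+s)*(m+1) ≤ (r+s)*(2*n*s) := Nat.mul_le_mul_left _ h2m
          rw [hbs]
          have hkey : 2*n*(r+s)*r + (r+s)*m + r < 2*n*(r+s)^2 := by nlinarith [hA, hs1]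
          nlinarith [hkey]
      have hc1 : ((((n*(b*m+r)+m : ℕ):ℤ)):ℚ)
          < (2*(n:ℚ)^2*(b:ℚ)^2+2*(n:ℚ)*(b:ℚ)+1) * ((b*m+r : ℕ):ℚ) / (2*(n:ℚ)*(b:ℚ)^2) := by
        rw [lt_div_iff₀ hq0]
        have := (Nat.cast_lt (α := ℚ)).mpr key1
        push_cast at this ⊢
        linarith
      have hc2 : (2*(n:ℚ)^2*(b:ℚ)^2+2*(n:ℚ)*(b:ℚ)+1) * ((b*m+r : ℕ):ℚ) / (2*(n:ℚ)*(b:ℚ)^2)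
          < ((((n*(b*m+r)+m : ℕ):ℤ)):ℚ) + 1 := by
        rw [div_lt_iff₀ hq0]
        have := (Nat.cast_lt (α := ℚ)).mpr key2
        push_cast at this ⊢
        linarith
      have saw2 := saw_eq _ ((n*(b*m+r)+m : ℕ):ℤ) hc1 hc2
      rw [saw1, saw2, if_neg hχ, if_neg h0]
      push_cast
      field_simp
      ring

lemma sigma1 (n b : ℕ) (hn : 1 ≤ n) (hb : 1 ≤ b) :
    ∑ m ∈ Finset.range (2*n*b), ∑ r ∈ Finset.range b,
      ((((b:ℚ)*m+r)/(2*(n:ℚ)*(b:ℚ)^2) - 1/2) *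
        ((r:ℚ)/(b:ℚ) + ((b:ℚ)*m+r)/(2*(n:ℚ)*(b:ℚ)^2) - 1/2)) =
      (2 + 4*(n:ℚ)*(b:ℚ) - 6*(n:ℚ)*(b:ℚ)^2 + 2*(n:ℚ)*(b:ℚ)^3 + 4*(n:ℚ)^2*(b:ℚ)^4)
        / (24*(n:ℚ)*(b:ℚ)^2) := by
  have hn0 : (0:ℚ) < n := by exact_mod_cast hn
  have hb0 : (0:ℚ) < b := by exact_mod_cast hb
  have inner1 : ∀ m ∈ Finset.range (2*n*b),
      (∑ r ∈ Finset.range b,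
        ((((b:ℚ)*m+r)/(2*(n:ℚ)*(b:ℚ)^2) - 1/2) *
          ((r:ℚ)/(b:ℚ) + ((b:ℚ)*m+r)/(2*(n:ℚ)*(b:ℚ)^2) - 1/2))) =
      ((b:ℚ)/4 + (-1/(2*(n:ℚ)*(b:ℚ)^2) - 1/(2*(b:ℚ)))*((b:ℚ)*((b:ℚ)-1)/2)
          + (1/((b:ℚ)*(2*(n:ℚ)*(b:ℚ)^2)) + 1/(2*(n:ℚ)*(b:ℚ)^2)^2)
            *((b:ℚ)*((b:ℚ)-1)*(2*(b:ℚ)-1)/6))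
        + (-(b:ℚ)^2/(2*(n:ℚ)*(b:ℚ)^2)
          + (1/(2*(n:ℚ)*(b:ℚ)^2) + 2*(b:ℚ)/(2*(n:ℚ)*(b:ℚ)^2)^2)*((b:ℚ)*((b:ℚ)-1)/2))*(m:ℚ)
        + ((b:ℚ)^3/(2*(n:ℚ)*(b:ℚ)^2)^2)*(m:ℚ)^2 := by
    intro m _
    rw [sum_quad ((b:ℚ)^2*(m:ℚ)^2/(2*(n:ℚ)*(b:ℚ)^2)^2 - (b:ℚ)*(m:ℚ)/(2*(n:ℚ)*(b:ℚ)^2) + 1/4)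
      ((m:ℚ)/(2*(n:ℚ)*(b:ℚ)^2) + 2*(b:ℚ)*(m:ℚ)/(2*(n:ℚ)*(b:ℚ)^2)^2
        - 1/(2*(n:ℚ)*(b:ℚ)^2) - 1/(2*(b:ℚ)))
      (1/((b:ℚ)*(2*(n:ℚ)*(b:ℚ)^2)) + 1/(2*(n:ℚ)*(b:ℚ)^2)^2) b]
    · field_simp
      ring
    · intro r
      field_simp
      ring
  rw [Finset.sum_congr rfl inner1, sum_quad _ _ _ (2*n*b) _ (fun m => rfl)]
  push_cast
  field_simp
  ring

lemma sigma2 (n b : ℕ) (hn : 1 ≤ n) (hb : 1 ≤ b) :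
    ∑ m ∈ Finset.range (2*n*b), ∑ r ∈ Finset.range b,
      (if 1 ≤ r ∧ 2*n*(b-r) ≤ m then (((b:ℚ)*m+r)/(2*(n:ℚ)*(b:ℚ)^2) - 1/2) else 0) =
      (4*(n:ℚ)*(b:ℚ) - 6*(n:ℚ)*(b:ℚ)^2 + 2*(n:ℚ)*(b:ℚ)^3 - 4*(n:ℚ)^2*(b:ℚ)^2
        + 4*(n:ℚ)^2*(b:ℚ)^4) / (24*(n:ℚ)*(b:ℚ)^2) := by
  have hn0 : (0:ℚ) < n := by exact_mod_cast hn
  have hb0 : (0:ℚ) < b := by exact_mod_cast hb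
  rw [Finset.sum_comm]
  have hr_inner : ∀ r ∈ Finset.range b,
      (∑ m ∈ Finset.range (2*n*b),
        if 1 ≤ r ∧ 2*n*(b-r) ≤ m then (((b:ℚ)*m+r)/(2*(n:ℚ)*(b:ℚ)^2) - 1/2) else 0) =
      0 + ((b:ℚ)*(2*(n:ℚ)*(2*(n:ℚ)*(b:ℚ))-(n:ℚ))/(2*(n:ℚ)*(b:ℚ)^2) - (n:ℚ))*(r:ℚ)
        + ((2*(n:ℚ) - 2*(n:ℚ)^2*(b:ℚ))/(2*(n:ℚ)*(b:ℚ)^2))*(r:ℚ)^2 := by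
    intro r hr
    rw [Finset.mem_range] at hr
    by_cases h1r : 1 ≤ r
    · have hcond : ∀ m, (if 1 ≤ r ∧ 2*n*(b-r) ≤ m then (((b:ℚ)*m+r)/(2*(n:ℚ)*(b:ℚ)^2) - 1/2) else 0)
          = (if 2*n*(b-r) ≤ m then (((b:ℚ)*m+r)/(2*(n:ℚ)*(b:ℚ)^2) - 1/2) else 0) := by
        intro m
        by_cases h : 2*n*(b-r) ≤ m <;> simp [h, h1r]
      rw [Finset.sum_congr rfl (fun m _ => hcond m)]
      have ha : 2*n*(b-r) ≤ 2*n*b := Nat.mul_le_mul_left _ (Nat.sub_le b r)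
      rw [Finset.range_eq_Ico,
        ← Finset.sum_Ico_consecutive _ (Nat.zero_le (2*n*(b-r))) ha]
      have hz : (∑ m ∈ Finset.Ico 0 (2*n*(b-r)),
          if 2*n*(b-r) ≤ m then (((b:ℚ)*m+r)/(2*(n:ℚ)*(b:ℚ)^2) - 1/2) else 0) = 0 :=
        Finset.sum_eq_zero (fun m hmm => by
          rw [Finset.mem_Ico] at hmm
          rw [if_neg (Nat.not_le.mpr hmm.2)])
      rw [hz, zero_add]
      have hcong : ∀ m ∈ Finset.Ico (2*n*(b-r)) (2*n*b),
          (if 2*n*(b-r) ≤ m then (((b:ℚ)*m+r)/(2*(n:ℚ)*(b:ℚ)^2) - 1/2) else 0)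
          = ((r:ℚ)/(2*(n:ℚ)*(b:ℚ)^2) - 1/2) + ((b:ℚ)/(2*(n:ℚ)*(b:ℚ)^2))*(m:ℚ)
            + 0*(m:ℚ)^2 := by
        intro m hmm
        rw [Finset.mem_Ico] at hmm
        rw [if_pos hmm.1]
        ring
      rw [Finset.sum_congr rfl hcong,
        sum_quad_Ico ((r:ℚ)/(2*(n:ℚ)*(b:ℚ)^2) - 1/2) ((b:ℚ)/(2*(n:ℚ)*(b:ℚ)^2)) 0
          (2*n*(b-r)) (2*n*b) ha _ (fun m => rfl)]
      have hbr : ((b - r : ℕ):ℚ) = (b:ℚ) - (r:ℚ) := by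
        exact_mod_cast Nat.cast_sub (le_of_lt hr)
      push_cast [hbr]
      field_simp
      ring
    · have hr0 : r = 0 := by omega
      subst hr0
      simp [h1r]
  rw [Finset.sum_congr rfl hr_inner, sum_quad _ _ _ b _ (fun r => rfl)]
  field_simp
  ring

lemma delta_sum (n b : ℕ) (hn : 1 ≤ n) (hb : 1 ≤ b) :
    ∑ m ∈ Finset.range (2*n*b), ∑ r ∈ Finset.range b,
      (if b*m+r = 0 then (1/4:ℚ) else 0) = 1/4 := by
  have hinner : ∀ m ∈ Finset.range (2*n*b),
      (∑ r ∈ Finset.range b, if b*m+r = 0 then (1/4:ℚ) else 0)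
      = if m = 0 then (1/4:ℚ) else 0 := by
    intro m _
    by_cases hm0 : m = 0
    · subst hm0
      rw [if_pos rfl]
      have : ∀ r, (if b*0+r = 0 then (1/4:ℚ) else 0) = if r = 0 then (1/4:ℚ) else 0 := by
        intro r; simp
      rw [Finset.sum_congr rfl (fun r _ => this r)]
      rw [Finset.sum_ite_eq' (Finset.range b) 0 (fun _ => (1/4:ℚ))]
      rw [if_pos (Finset.mem_range.mpr hb)]
    · rw [if_neg hm0]
      apply Finset.sum_eq_zero
      intro r _
      rw [if_neg]
      have h1 : 1 ≤ b*m := Nat.mul_pos hb (Nat.pos_of_ne_zero hm0)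
      omega
  rw [Finset.sum_congr rfl hinner,
    Finset.sum_ite_eq' (Finset.range (2*n*b)) 0 (fun _ => (1/4:ℚ))]
  rw [if_pos (Finset.mem_range.mpr (by positivity))]

-- step 1 : dedekindSum as a sum over range of naturals
lemma ded_as_range (n b : ℕ) (hn : 1 ≤ n) (hb : 1 ≤ b) :
    dedekindSum (2*(n:ℤ)^2*(b:ℤ)^2 + 2*(n:ℤ)*(b:ℤ) + 1) (2*(n:ℤ)*(b:ℤ)^2) =
    ∑ m ∈ Finset.range (2*n*b), ∑ r ∈ Finset.range b,
      (saw (((b*m+r : ℕ):ℚ) / (2*(n:ℚ)*(b:ℚ)^2)) *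
        saw ((2*(n:ℚ)^2*(b:ℚ)^2+2*(n:ℚ)*(b:ℚ)+1) * ((b*m+r : ℕ):ℚ) / (2*(n:ℚ)*(b:ℚ)^2))) := by
  have hn0 : (0:ℚ) < n := by exact_mod_cast hn
  have hb0 : (0:ℚ) < b := by exact_mod_cast hb
  have hq0 : (0:ℚ) < 2*(n:ℚ)*(b:ℚ)^2 := by
    have : (0:ℚ) < 2*(n:ℚ) := by linarith
    exact mul_pos this (pow_pos hb0 2)
  have habs : |(2*(n:ℤ)*(b:ℤ)^2)| = ((2*n*b^2 : ℕ):ℤ) := by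
    rw [abs_of_nonneg (by positivity)]
    push_cast
    ring
  rw [dedekindSum, habs, sum_Icc_int]
  have hFn : ∀ i ∈ Finset.range (2*n*b^2),
      saw ((((i:ℤ)+1 : ℤ):ℚ) / ((2*(n:ℤ)*(b:ℤ)^2 : ℤ):ℚ)) *
        saw (((2*(n:ℤ)^2*(b:ℤ)^2 + 2*(n:ℤ)*(b:ℤ) + 1 : ℤ):ℚ) * (((i:ℤ)+1 : ℤ):ℚ)
          / ((2*(n:ℤ)*(b:ℤ)^2 : ℤ):ℚ)) =
      saw (((i+1 : ℕ):ℚ) / (2*(n:ℚ)*(b:ℚ)^2)) *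
        saw ((2*(n:ℚ)^2*(b:ℚ)^2+2*(n:ℚ)*(b:ℚ)+1) * ((i+1 : ℕ):ℚ) / (2*(n:ℚ)*(b:ℚ)^2)) := by
    intro i _
    congr 2 <;> push_cast <;> ring
  rw [Finset.sum_congr rfl hFn]
  rw [sum_range_shift
      (fun j => saw (((j : ℕ):ℚ) / (2*(n:ℚ)*(b:ℚ)^2)) *
        saw ((2*(n:ℚ)^2*(b:ℚ)^2+2*(n:ℚ)*(b:ℚ)+1) * ((j : ℕ):ℚ) / (2*(n:ℚ)*(b:ℚ)^2)))
      (2*n*b^2) (by norm_num [saw]) ?_]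
  · have hq : 2*n*b^2 = (2*n*b)*b := by ring
    rw [hq, sum_range_mul]
  · have h1 : ((2*n*b^2 : ℕ):ℚ) / (2*(n:ℚ)*(b:ℚ)^2) = 1 := by
      rw [div_eq_one_iff_eq hq0.ne']
      push_cast
      ring
    rw [h1]
    have : saw 1 = 0 := by norm_num [saw]
    rw [this, zero_mul]

lemma ded_eval (n b : ℕ) (hn : 1 ≤ n) (hb : 1 ≤ b) :
    dedekindSum (2*(n:ℤ)^2*(b:ℤ)^2 + 2*(n:ℤ)*(b:ℤ) + 1) (2*(n:ℤ)*(b:ℤ)^2) =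
      (n:ℚ)/6 - 1/4 + 1/(12*(n:ℚ)*(b:ℚ)^2) := by
  have hn0 : (0:ℚ) < n := by exact_mod_cast hn
  have hb0 : (0:ℚ) < b := by exact_mod_cast hb
  rw [ded_as_range n b hn hb]
  rw [Finset.sum_congr rfl (fun m hm => Finset.sum_congr rfl
    (fun r hr => point_lemma n b m r hn hb (Finset.mem_range.mp hm) (Finset.mem_range.mp hr)))]
  simp only [Finset.sum_sub_distrib]
  rw [sigma1 n b hn hb, sigma2 n b hn hb, delta_sum n b hn hb]
  field_simp
  ring

theorem lescop_lens_nb (n b : ℕ) (hn : 1 ≤ n) (hb : 1 ≤ b) :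
    lescopLens (2 * (n : ℤ) ^ 2 * (b : ℤ) ^ 2 + 2 * (n : ℤ) * (b : ℤ) + 1)
        (2 * (n : ℤ) * (b : ℤ) ^ 2) =
      (b : ℚ) ^ 2 * ((n : ℚ) ^ 3 - (n : ℚ)) / 12 := by
  have hn0 : (0:ℚ) < n := by exact_mod_cast hn
  have hb0 : (0:ℚ) < b := by exact_mod_cast hb
  rw [lescopLens, ded_eval n b hn hb]
  push_cast
  field_simp
  ring
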